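/- Let ω ⊂ ℝⁿ be a bounded open set, let x₀ ∈ ω and ρ > 0 be such that D_ρ(x₀) ⊂ ω. Then there exists a constant C_ρ > 0, depending only on n and ρ (in particular independent of x₀), such that for every v ∈ Ĥ^{1/2}(ω;ℝ^m) one has ∫_{ℝⁿ} |v(x)|²/(|x−x₀|+1)^{n+1} dx ≤ C_ρ ( E(v, D_ρ(x₀)) + ∫_{D_ρ(x₀)} |v|² dx ). -/

import Mathlib

open MeasureTheory Metric Set Filter Topology
open scoped ENNReal

noncomputable section

abbrev En (n : ℕ) := EuclideanSpace ℝ (Fin n)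

/-- The normalization constant `γ_n = Γ((n+1)/2)/π^((n+1)/2)`. -/
def gam (n : ℕ) : ℝ := Real.Gamma (((n : ℝ) + 1) / 2) / Real.pi ^ (((n : ℝ) + 1) / 2)

/-- The kernel `|v x - v y|² / |x - y|^(n+1)` as an extended nonnegative real. -/
def kern {n m : ℕ} (v : En n → En m) (x y : En n) : ℝ≥0∞ :=
  ENNReal.ofReal (‖v x - v y‖ ^ 2 / ‖x - y‖ ^ (n + 1))

/-- The 1/2-Dirichlet energy `E(v, ω)` (extended-real valued). -/
def energyE {n m : ℕ} (v : En n → En m) (ω : Set (En n)) : ℝ≥0∞ :=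
  ENNReal.ofReal (gam n / 4) * (∫⁻ x in ω, ∫⁻ y in ω, kern v x y) +
    ENNReal.ofReal (gam n / 2) * (∫⁻ x in ω, ∫⁻ y in ωᶜ, kern v x y)

/-- `v ∈ L²_loc(ℝⁿ; ℝᵐ)`. -/
def MemL2loc {n m : ℕ} (v : En n → En m) : Prop :=
  AEStronglyMeasurable v (volume : Measure (En n)) ∧
    ∀ R : ℝ, IntegrableOn (fun x => ‖v x‖ ^ 2) (ball (0 : En n) R)

/-- `v ∈ Ĥ^{1/2}(ω; ℝᵐ)`: locally square-integrable with finite 1/2-Dirichlet energy. -/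
def MemHatH {n m : ℕ} (v : En n → En m) (ω : Set (En n)) : Prop :=
  MemL2loc v ∧ energyE v ω < ⊤

lemma aux_core (n : ℕ) {ρ p q r s t : ℝ} (hρ : 0 < ρ) (hp : 0 ≤ p) (hq : 0 ≤ q)
    (hr0 : 0 ≤ r) (hr : r ≤ p + q) (ht : ρ ≤ t) (hs1 : s ≤ ρ / 2 + t) (hs0 : ρ / 2 ≤ s) :
    r ^ 2 / (t + 1) ^ (n + 1) ≤
      2 * (3 / 2) ^ (n + 1) * (p ^ 2 / s ^ (n + 1)) + 2 * q ^ 2 / (t + 1) ^ (n + 1) := by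
  have ht0 : 0 < t := lt_of_lt_of_le hρ ht
  have h1t : (0:ℝ) < t + 1 := by linarith
  have hs : 0 < s := by linarith
  have hA : (0:ℝ) < (t + 1) ^ (n + 1) := pow_pos h1t _
  have hS : (0:ℝ) < s ^ (n + 1) := pow_pos hs _
  have hr2 : r ^ 2 ≤ 2 * p ^ 2 + 2 * q ^ 2 := by
    nlinarith [sq_nonneg (p - q), mul_le_mul hr hr hr0 (by linarith : (0:ℝ) ≤ p + q)]
  have key : s ^ (n + 1) ≤ (3 / 2) ^ (n + 1) * (t + 1) ^ (n + 1) := by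
    rw [← mul_pow]
    exact pow_le_pow_left₀ hs.le (by linarith) _
  have h1 : 2 * p ^ 2 / (t + 1) ^ (n + 1) ≤ 2 * (3 / 2) ^ (n + 1) * (p ^ 2 / s ^ (n + 1)) := by
    rw [mul_div_assoc' (2 * (3 / 2) ^ (n + 1)) (p ^ 2), div_le_div_iff₀ hA hS]
    have h2 := mul_le_mul_of_nonneg_left key (by positivity : (0:ℝ) ≤ 2 * p ^ 2)
    nlinarith [h2]
  have h2 : r ^ 2 / (t + 1) ^ (n + 1) ≤ (2 * p ^ 2 + 2 * q ^ 2) / (t + 1) ^ (n + 1) := by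
    gcongr
  rw [add_div] at h2
  linarith

lemma aux_pt {n m : ℕ} {ρ : ℝ} (hρ : 0 < ρ) (v : En n → En m) {x₀ x y : En n}
    (hx : x ∈ ball x₀ (ρ / 2)) (hy : y ∈ (ball x₀ ρ)ᶜ) :
    ENNReal.ofReal (‖v y‖ ^ 2 / (‖y - x₀‖ + 1) ^ (n + 1)) ≤
      ENNReal.ofReal (2 * (3 / 2) ^ (n + 1)) * kern v x y +
        ENNReal.ofReal (2 * ‖v x‖ ^ 2) *
          ENNReal.ofReal ((1 + ‖y - x₀‖) ^ (-((n : ℝ) + 1))) := by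
  have hxx : ‖x - x₀‖ < ρ / 2 := by
    rw [mem_ball, dist_eq_norm] at hx; exact hx
  have ht : ρ ≤ ‖y - x₀‖ := by
    rw [mem_compl_iff, mem_ball, dist_eq_norm, not_lt] at hy; exact hy
  have hs1 : ‖x - y‖ ≤ ρ / 2 + ‖y - x₀‖ := by
    have := norm_sub_le_norm_sub_add_norm_sub x x₀ y
    have h2 : ‖x₀ - y‖ = ‖y - x₀‖ := norm_sub_rev _ _
    linarith
  have hs0 : ρ / 2 ≤ ‖x - y‖ := by
    have h1 := norm_sub_le_norm_sub_add_norm_sub y x x₀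
    have h2 : ‖y - x‖ = ‖x - y‖ := norm_sub_rev _ _
    have h3 : ‖x - x₀‖ < ρ / 2 := hxx
    linarith
  have hr : ‖v y‖ ≤ ‖v x - v y‖ + ‖v x‖ := by
    have h := norm_le_insert (v x) (v y)
    linarith
  have hpos : (0:ℝ) < ‖y - x₀‖ + 1 := by positivity
  have e2 : (1 + ‖y - x₀‖) ^ (-((n : ℝ) + 1)) = 1 / (‖y - x₀‖ + 1) ^ (n + 1) := by
    rw [show (-((n : ℝ) + 1)) = -((n + 1 : ℕ) : ℝ) by push_cast; ring,
      Real.rpow_neg (by positivity), Real.rpow_natCast, add_comm 1 ‖y - x₀‖, one_div]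
  have e3 : ENNReal.ofReal (2 * ‖v x‖ ^ 2) *
      ENNReal.ofReal ((1 + ‖y - x₀‖) ^ (-((n : ℝ) + 1))) =
      ENNReal.ofReal (2 * ‖v x‖ ^ 2 / (‖y - x₀‖ + 1) ^ (n + 1)) := by
    rw [e2, ← ENNReal.ofReal_mul (by positivity)]
    congr 1
    field_simp
  have e1 : ENNReal.ofReal (2 * (3 / 2) ^ (n + 1)) * kern v x y =
      ENNReal.ofReal (2 * (3 / 2) ^ (n + 1) * (‖v x - v y‖ ^ 2 / ‖x - y‖ ^ (n + 1))) := by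
    rw [kern, ← ENNReal.ofReal_mul (by positivity)]
  rw [e1, e3, ← ENNReal.ofReal_add (by positivity) (by positivity)]
  exact ENNReal.ofReal_le_ofReal
    (aux_core n hρ (norm_nonneg _) (norm_nonneg _) (norm_nonneg _) hr ht hs1 hs0)


/-- Lemma `adminHchap`: given `ρ > 0` there is a constant `C = C_ρ > 0`,
depending only on `n` and `ρ` (in particular independent of `x₀` and of `ω`), such that for
every bounded open `ω`, every `x₀ ∈ ω` with `D_ρ(x₀) ⊆ ω` and every `v ∈ Ĥ^{1/2}(ω;ℝᵐ)`,
`∫_{ℝⁿ} |v x|²/(|x-x₀|+1)^{n+1} dx ≤ C (E(v, D_ρ(x₀)) + ∫_{D_ρ(x₀)} |v|²)`. -/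
theorem statement0 (n m : ℕ) (hn : 1 ≤ n) (hm : 1 ≤ m) (ρ : ℝ) (hρ : 0 < ρ) :
    ∃ C : ℝ, 0 < C ∧
      ∀ (ω : Set (En n)), IsOpen ω → Bornology.IsBounded ω →
        ∀ x₀ : En n, x₀ ∈ ω → ball x₀ ρ ⊆ ω →
          ∀ v : En n → En m, MemHatH v ω →
            (∫⁻ x, ENNReal.ofReal (‖v x‖ ^ 2 / (‖x - x₀‖ + 1) ^ (n + 1))) ≤
              ENNReal.ofReal C *
                (energyE v (ball x₀ ρ) +
                  ∫⁻ x in ball x₀ ρ, ENNReal.ofReal (‖v x‖ ^ 2)) := by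
  have hgam : 0 < gam n := by
    have h1 : 0 < Real.Gamma (((n : ℝ) + 1) / 2) := Real.Gamma_pos_of_pos (by positivity)
    have h2 : (0:ℝ) < Real.pi ^ (((n : ℝ) + 1) / 2) := Real.rpow_pos_of_pos Real.pi_pos _
    exact div_pos h1 h2
  set a : ℝ≥0∞ := ENNReal.ofReal (gam n / 2) with ha_def
  have ha0 : a ≠ 0 := (ENNReal.ofReal_pos.mpr (by linarith)).ne'
  have hatop : a ≠ ⊤ := ENNReal.ofReal_ne_top
  set b : ℝ≥0∞ := volume (ball (0 : En n) (ρ / 2)) with hb_def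
  have hb0 : b ≠ 0 := (measure_ball_pos volume 0 (by positivity)).ne'
  have hbtop : b ≠ ⊤ := measure_ball_lt_top.ne
  set K : ℝ≥0∞ := ∫⁻ y : En n, ENNReal.ofReal ((1 + ‖y‖) ^ (-((n : ℝ) + 1))) with hK_def
  have hKtop : K ≠ ⊤ := by
    have := finite_integral_one_add_norm (E := En n) (μ := volume)
      (r := (n : ℝ) + 1) (by rw [finrank_euclideanSpace_fin]; linarith)
    exact this.ne
  set c2 : ℝ≥0∞ := ENNReal.ofReal (2 * (3 / 2) ^ (n + 1)) with hc2_def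
  have hc20 : c2 ≠ 0 := (ENNReal.ofReal_pos.mpr (by positivity)).ne'
  have hc2top : c2 ≠ ⊤ := ENNReal.ofReal_ne_top
  set D : ℝ≥0∞ := c2 + a * b + 2 * a * K with hD_def
  have hDtop : D ≠ ⊤ := by
    refine ENNReal.add_ne_top.2 ⟨ENNReal.add_ne_top.2 ⟨hc2top, ENNReal.mul_ne_top hatop hbtop⟩, ?_⟩
    exact ENNReal.mul_ne_top (ENNReal.mul_ne_top (by norm_num) hatop) hKtop
  have hab0 : a * b ≠ 0 := mul_ne_zero ha0 hb0
  have habtop : a * b ≠ ⊤ := ENNReal.mul_ne_top hatop hbtop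
  have hCe0 : (a * b)⁻¹ * D ≠ 0 := by
    refine mul_ne_zero (ENNReal.inv_ne_zero.2 habtop) ?_
    intro h
    rw [hD_def] at h
    simp only [add_eq_zero] at h
    exact hc20 h.1.1
  have hCetop : (a * b)⁻¹ * D ≠ ⊤ := ENNReal.mul_ne_top (ENNReal.inv_ne_top.2 hab0) hDtop
  refine ⟨((a * b)⁻¹ * D).toReal, ENNReal.toReal_pos hCe0 hCetop, ?_⟩
  intro ω hωo hωb x₀ hx₀ hball v hv
  have hvm : AEStronglyMeasurable v (volume : Measure (En n)) := hv.1.1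
  -- notation
  have hKt : (∫⁻ y : En n, ENNReal.ofReal ((1 + ‖y - x₀‖) ^ (-((n : ℝ) + 1)))) = K := by
    rw [hK_def]
    simpa [sub_eq_add_neg] using lintegral_add_right_eq_self (μ := volume)
      (fun z : En n => ENNReal.ofReal ((1 + ‖z‖) ^ (-((n : ℝ) + 1)))) (-x₀)
  have hhmeas : Measurable fun y : En n => ENNReal.ofReal ((1 + ‖y - x₀‖) ^ (-((n : ℝ) + 1))) := by
    apply ENNReal.measurable_ofReal.comp
    apply Continuous.measurable
    exact (continuous_const.add ((continuous_id.sub continuous_const).norm)).rpow_const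
      (fun y => Or.inl (ne_of_gt (lt_of_lt_of_le one_pos (le_add_of_nonneg_right (norm_nonneg _)))))
  -- Step Bx
  have hBx : ∀ x ∈ ball x₀ (ρ / 2),
      (∫⁻ y in (ball x₀ ρ)ᶜ, ENNReal.ofReal (‖v y‖ ^ 2 / (‖y - x₀‖ + 1) ^ (n + 1))) ≤
        c2 * (∫⁻ y in (ball x₀ ρ)ᶜ, kern v x y) + ENNReal.ofReal (2 * ‖v x‖ ^ 2) * K := by
    intro x hx
    calc (∫⁻ y in (ball x₀ ρ)ᶜ, ENNReal.ofReal (‖v y‖ ^ 2 / (‖y - x₀‖ + 1) ^ (n + 1)))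
        ≤ ∫⁻ y in (ball x₀ ρ)ᶜ, (c2 * kern v x y +
            ENNReal.ofReal (2 * ‖v x‖ ^ 2) *
              ENNReal.ofReal ((1 + ‖y - x₀‖) ^ (-((n : ℝ) + 1)))) :=
          lintegral_mono_ae (ae_restrict_of_forall_mem measurableSet_ball.compl
            (fun y hy => aux_pt hρ v hx hy))
      _ = (∫⁻ y in (ball x₀ ρ)ᶜ, c2 * kern v x y) +
            ∫⁻ y in (ball x₀ ρ)ᶜ, ENNReal.ofReal (2 * ‖v x‖ ^ 2) *
              ENNReal.ofReal ((1 + ‖y - x₀‖) ^ (-((n : ℝ) + 1))) :=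
          lintegral_add_right _ (measurable_const.mul hhmeas)
      _ ≤ c2 * (∫⁻ y in (ball x₀ ρ)ᶜ, kern v x y) + ENNReal.ofReal (2 * ‖v x‖ ^ 2) * K := by
          rw [lintegral_const_mul' _ _ ENNReal.ofReal_ne_top,
            lintegral_const_mul' _ _ ENNReal.ofReal_ne_top]
          gcongr
          calc (∫⁻ y in (ball x₀ ρ)ᶜ, ENNReal.ofReal ((1 + ‖y - x₀‖) ^ (-((n : ℝ) + 1))))
              ≤ ∫⁻ y : En n, ENNReal.ofReal ((1 + ‖y - x₀‖) ^ (-((n : ℝ) + 1))) :=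
                setLIntegral_le_lintegral _ _
            _ = K := hKt
  -- Step B
  have hB : b * (∫⁻ y in (ball x₀ ρ)ᶜ, ENNReal.ofReal (‖v y‖ ^ 2 / (‖y - x₀‖ + 1) ^ (n + 1))) ≤
      c2 * (∫⁻ x in ball x₀ ρ, ∫⁻ y in (ball x₀ ρ)ᶜ, kern v x y) +
        2 * K * ∫⁻ x in ball x₀ ρ, ENNReal.ofReal (‖v x‖ ^ 2) := by
    have hsub : ball x₀ (ρ / 2) ⊆ ball x₀ ρ := ball_subset_ball (by linarith)
    have hvol : volume (ball x₀ (ρ / 2)) = b := by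
      rw [hb_def]; exact Measure.addHaar_ball_center volume x₀ (ρ / 2)
    have hGmeas : AEMeasurable (fun x : En n => ENNReal.ofReal (2 * ‖v x‖ ^ 2) * K)
        (volume.restrict (ball x₀ (ρ / 2))) := by
      refine AEMeasurable.mul_const ?_ K
      exact (ENNReal.measurable_ofReal.comp_aemeasurable
        (((hvm.norm.aemeasurable).pow_const 2).const_mul 2)).restrict
    calc b * (∫⁻ y in (ball x₀ ρ)ᶜ, ENNReal.ofReal (‖v y‖ ^ 2 / (‖y - x₀‖ + 1) ^ (n + 1)))
        = ∫⁻ _ in ball x₀ (ρ / 2),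
            (∫⁻ y in (ball x₀ ρ)ᶜ, ENNReal.ofReal (‖v y‖ ^ 2 / (‖y - x₀‖ + 1) ^ (n + 1))) := by
          rw [setLIntegral_const, hvol, mul_comm]
      _ ≤ ∫⁻ x in ball x₀ (ρ / 2), (c2 * (∫⁻ y in (ball x₀ ρ)ᶜ, kern v x y) +
            ENNReal.ofReal (2 * ‖v x‖ ^ 2) * K) :=
          lintegral_mono_ae (ae_restrict_of_forall_mem measurableSet_ball hBx)
      _ = (∫⁻ x in ball x₀ (ρ / 2), c2 * (∫⁻ y in (ball x₀ ρ)ᶜ, kern v x y)) +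
            ∫⁻ x in ball x₀ (ρ / 2), ENNReal.ofReal (2 * ‖v x‖ ^ 2) * K :=
          lintegral_add_right' _ hGmeas
      _ ≤ c2 * (∫⁻ x in ball x₀ ρ, ∫⁻ y in (ball x₀ ρ)ᶜ, kern v x y) +
            2 * K * ∫⁻ x in ball x₀ ρ, ENNReal.ofReal (‖v x‖ ^ 2) := by
          refine add_le_add ?_ ?_
          · rw [lintegral_const_mul' _ _ hc2top]
            exact mul_le_mul_right (lintegral_mono_set hsub) c2
          · have heq : ∀ x : En n, ENNReal.ofReal (2 * ‖v x‖ ^ 2) * K =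
                2 * K * ENNReal.ofReal (‖v x‖ ^ 2) := by
              intro x
              rw [ENNReal.ofReal_mul (by norm_num), ENNReal.ofReal_ofNat]
              ring
            simp_rw [heq]
            rw [lintegral_const_mul' _ _ (ENNReal.mul_ne_top (by norm_num) hKtop)]
            exact mul_le_mul_right (lintegral_mono_set hsub) _
  -- Step A
  have hA : (∫⁻ x, ENNReal.ofReal (‖v x‖ ^ 2 / (‖x - x₀‖ + 1) ^ (n + 1))) ≤
      (∫⁻ x in ball x₀ ρ, ENNReal.ofReal (‖v x‖ ^ 2)) +
        ∫⁻ y in (ball x₀ ρ)ᶜ, ENNReal.ofReal (‖v y‖ ^ 2 / (‖y - x₀‖ + 1) ^ (n + 1)) := by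
    rw [← lintegral_add_compl (fun x => ENNReal.ofReal (‖v x‖ ^ 2 / (‖x - x₀‖ + 1) ^ (n + 1)))
      (measurableSet_ball : MeasurableSet (ball x₀ ρ))]
    refine add_le_add (lintegral_mono fun y => ?_) le_rfl
    refine ENNReal.ofReal_le_ofReal (div_le_self (by positivity) ?_)
    exact one_le_pow₀ (by linarith [norm_nonneg (y - x₀)])
  -- Step C
  have hC : a * (∫⁻ x in ball x₀ ρ, ∫⁻ y in (ball x₀ ρ)ᶜ, kern v x y) ≤
      energyE v (ball x₀ ρ) := le_add_self
  -- assembly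
  set L := ∫⁻ x, ENNReal.ofReal (‖v x‖ ^ 2 / (‖x - x₀‖ + 1) ^ (n + 1)) with hL_def
  set Sb := ∫⁻ x in ball x₀ ρ, ENNReal.ofReal (‖v x‖ ^ 2) with hSb_def
  set T := ∫⁻ y in (ball x₀ ρ)ᶜ, ENNReal.ofReal (‖v y‖ ^ 2 / (‖y - x₀‖ + 1) ^ (n + 1)) with hT_def
  set I₂ := ∫⁻ x in ball x₀ ρ, ∫⁻ y in (ball x₀ ρ)ᶜ, kern v x y with hI2_def
  set E := energyE v (ball x₀ ρ) with hE_def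
  have key : (a * b) * L ≤ D * (E + Sb) := by
    calc (a * b) * L ≤ (a * b) * (Sb + T) := mul_le_mul_right hA _
      _ = a * b * Sb + a * (b * T) := by ring
      _ ≤ a * b * Sb + a * (c2 * I₂ + 2 * K * Sb) := add_le_add le_rfl (mul_le_mul_right hB a)
      _ = c2 * (a * I₂) + (a * b + 2 * a * K) * Sb := by ring
      _ ≤ c2 * E + (a * b + 2 * a * K) * Sb := add_le_add (mul_le_mul_right hC c2) le_rfl
      _ ≤ D * E + D * Sb := by
          refine add_le_add (mul_le_mul_left ?_ E) (mul_le_mul_left ?_ Sb)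
          · exact le_trans le_self_add le_self_add
          · rw [hD_def, add_assoc]; exact le_add_self
      _ = D * (E + Sb) := (mul_add D E Sb).symm
  rw [ENNReal.ofReal_toReal hCetop]
  calc L = (a * b)⁻¹ * ((a * b) * L) := by
        rw [← mul_assoc, ENNReal.inv_mul_cancel hab0 habtop, one_mul]
    _ ≤ (a * b)⁻¹ * (D * (E + Sb)) := mul_le_mul_right key _
    _ = ((a * b)⁻¹ * D) * (E + Sb) := (mul_assoc _ _ _).symm
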